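/- For ℏ > 0 and parameters E_s, E_x, E_y, E_b ∈ R with E_y ≠ 0, the function φ₀(u) = C·exp(πℏ(2i(E_s/E_y)u + (E_x/E_y)u² - i(E_b/(3E_y))u³)) solves the first-order ODE (−iE_y)φ' + (πℏ(E_b u² + 2iE_x u − 2E_s))φ = 0, and φ₀ is square-integrable on R if and only if E_x/E_y < 0. -/

import Mathlib

open Real MeasureTheory

/-- The fiducial vector φ₀ for the case E_r = 0:
φ₀(u) = C exp(πℏ(2i(E_s/E_y)u + (E_x/E_y)u² − i(E_b/(3E_y))u³)). -/
noncomputable def phi0 (h Es Ex Ey Eb : ℝ) (C : ℂ) : ℝ → ℂ := fun u =>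
  C * Complex.exp ((π : ℂ) * (h : ℂ) *
    (2 * Complex.I * ((Es : ℂ) / (Ey : ℂ)) * (u : ℂ)
      + ((Ex : ℂ) / (Ey : ℂ)) * (u : ℂ) ^ 2
      - Complex.I * ((Eb : ℂ) / (3 * (Ey : ℂ))) * (u : ℂ) ^ 3))

lemma phi0_hasDerivAt (h Es Ex Ey Eb : ℝ) (C : ℂ) (u : ℝ) :
    HasDerivAt (phi0 h Es Ex Ey Eb C)
      (phi0 h Es Ex Ey Eb C u * ((π : ℂ) * (h : ℂ) *
        (2 * Complex.I * ((Es : ℂ) / (Ey : ℂ))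
          + ((Ex : ℂ) / (Ey : ℂ)) * (2 * (u : ℂ))
          - Complex.I * ((Eb : ℂ) / (3 * (Ey : ℂ))) * (3 * (u : ℂ) ^ 2)))) u := by
  have hE : ∀ z : ℂ, HasDerivAt (fun z : ℂ => (π : ℂ) * (h : ℂ) *
      (2 * Complex.I * ((Es : ℂ) / (Ey : ℂ)) * z
        + ((Ex : ℂ) / (Ey : ℂ)) * z ^ 2
        - Complex.I * ((Eb : ℂ) / (3 * (Ey : ℂ))) * z ^ 3))
      ((π : ℂ) * (h : ℂ) *
        (2 * Complex.I * ((Es : ℂ) / (Ey : ℂ))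
          + ((Ex : ℂ) / (Ey : ℂ)) * (2 * z)
          - Complex.I * ((Eb : ℂ) / (3 * (Ey : ℂ))) * (3 * z ^ 2))) z := by
    intro z
    have h1 : HasDerivAt (fun z : ℂ => 2 * Complex.I * ((Es : ℂ) / (Ey : ℂ)) * z)
        (2 * Complex.I * ((Es : ℂ) / (Ey : ℂ))) z := by
      simpa using (hasDerivAt_id z).const_mul (2 * Complex.I * ((Es : ℂ) / (Ey : ℂ)))
    have h2 : HasDerivAt (fun z : ℂ => ((Ex : ℂ) / (Ey : ℂ)) * z ^ 2)
        (((Ex : ℂ) / (Ey : ℂ)) * (2 * z)) z := by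
      simpa [mul_comm, mul_assoc] using (hasDerivAt_pow 2 z).const_mul ((Ex : ℂ) / (Ey : ℂ))
    have h3 : HasDerivAt (fun z : ℂ => Complex.I * ((Eb : ℂ) / (3 * (Ey : ℂ))) * z ^ 3)
        (Complex.I * ((Eb : ℂ) / (3 * (Ey : ℂ))) * (3 * z ^ 2)) z := by
      simpa [mul_comm, mul_assoc] using
        (hasDerivAt_pow 3 z).const_mul (Complex.I * ((Eb : ℂ) / (3 * (Ey : ℂ))))
    exact ((h1.add h2).sub h3).const_mul ((π : ℂ) * (h : ℂ))
  have hd := (((hE (u : ℂ)).cexp).const_mul C).comp_ofReal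
  convert hd using 1
  · rfl
  simp only [phi0]
  ring

lemma norm_phi0 (h Es Ex Ey Eb : ℝ) (C : ℂ) (u : ℝ) :
    ‖phi0 h Es Ex Ey Eb C u‖ = ‖C‖ * Real.exp (π * h * (Ex / Ey) * u ^ 2) := by
  unfold phi0
  have hz : (π : ℂ) * (h : ℂ) *
      (2 * Complex.I * ((Es : ℂ) / (Ey : ℂ)) * (u : ℂ)
        + ((Ex : ℂ) / (Ey : ℂ)) * (u : ℂ) ^ 2
        - Complex.I * ((Eb : ℂ) / (3 * (Ey : ℂ))) * (u : ℂ) ^ 3)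
      = ((π * h * (Ex / Ey) * u ^ 2 : ℝ) : ℂ)
        + ((π * h * (2 * (Es / Ey) * u - (Eb / (3 * Ey)) * u ^ 3) : ℝ) : ℂ) * Complex.I := by
    push_cast
    ring
  rw [norm_mul, Complex.norm_exp, hz]
  simp only [Complex.add_re, Complex.mul_re, Complex.ofReal_re, Complex.ofReal_im,
    Complex.I_re, Complex.I_im]
  ring

lemma continuous_phi0 (h Es Ex Ey Eb : ℝ) (C : ℂ) :
    Continuous (phi0 h Es Ex Ey Eb C) := by
  unfold phi0
  fun_prop

/-- φ₀ solves the first-order ODE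
(−iE_y)φ' + πℏ(E_b u² + 2iE_x u − 2E_s)φ = 0, and is square-integrable
if and only if E_x/E_y < 0. -/
theorem phi0_solves_and_square_integrable (h Es Ex Ey Eb : ℝ) (hh : 0 < h)
    (hEy : Ey ≠ 0) (C : ℂ) (hC : C ≠ 0) :
    (∀ u : ℝ, (-Complex.I * (Ey : ℂ)) * deriv (phi0 h Es Ex Ey Eb C) u
        + (π : ℂ) * (h : ℂ) * ((Eb : ℂ) * (u : ℂ) ^ 2 + 2 * Complex.I * (Ex : ℂ) * (u : ℂ)
            - 2 * (Es : ℂ)) * phi0 h Es Ex Ey Eb C u = 0) ∧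
    (MemLp (phi0 h Es Ex Ey Eb C) 2 volume ↔ Ex / Ey < 0) := by
  have hEyC : (Ey : ℂ) ≠ 0 := by exact_mod_cast hEy
  constructor
  · intro u
    rw [(phi0_hasDerivAt h Es Ex Ey Eb C u).deriv]
    field_simp
    ring_nf
    simp only [Complex.I_sq]
    ring
  · have hmeas := (continuous_phi0 h Es Ex Ey Eb C).aestronglyMeasurable (μ := volume)
    rw [memLp_two_iff_integrable_sq_norm hmeas]
    have hsq : ∀ u : ℝ, ‖phi0 h Es Ex Ey Eb C u‖ ^ 2
        = ‖C‖ ^ 2 * Real.exp (2 * π * h * (Ex / Ey) * u ^ 2) := by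
      intro u
      rw [norm_phi0, mul_pow, ← Real.exp_nat_mul]
      ring_nf
    constructor
    · intro hint
      by_contra hnot
      push_neg at hnot
      have hge : ∀ u : ℝ, ‖(‖C‖ ^ 2 : ℝ)‖ ≤ ‖phi0 h Es Ex Ey Eb C u‖ ^ 2 := by
        intro u
        rw [hsq u, Real.norm_of_nonneg (by positivity)]
        have ha : (0:ℝ) ≤ Ex / Ey := hnot
        have h0 : (0:ℝ) ≤ 2 * π * h * (Ex / Ey) * u ^ 2 :=
          mul_nonneg (mul_nonneg (by positivity) ha) (sq_nonneg u)
        nlinarith [Real.one_le_exp h0, sq_nonneg ‖C‖]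
      have hconst : Integrable (fun _ : ℝ => (‖C‖ ^ 2 : ℝ)) volume :=
        hint.mono' aestronglyMeasurable_const (Filter.Eventually.of_forall hge)
      rw [integrable_const_iff] at hconst
      rcases hconst with h0 | hfin
      · exact hC (by simpa using h0)
      · simpa using (@measure_lt_top _ _ (volume : Measure ℝ) hfin Set.univ).ne
    · intro hlt
      have hb : 0 < -(2 * π * h * (Ex / Ey)) := by
        have : 2 * π * h > 0 := by positivity
        nlinarith
      have := (integrable_exp_neg_mul_sq hb).const_mul (‖C‖ ^ 2)
      apply this.congr
      filter_upwards with u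
      rw [hsq u]
      ring_nf
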